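/- Let T = χ_{(−τ,τ)} + S_ω on L²(ℝ), where χ_{(−τ,τ)} is time-limiting to (−τ,τ) and S_ω = F χ_{(−ω,ω)} F* is band-limiting. Then 0 ∈ σ(T); in particular, T is not bounded below: the functions f_n(x) = e^{inx} e^{−(x−n)²} satisfy ‖f_n‖ = ‖f_0‖ > 0 while ‖T f_n‖ → 0. -/

import Mathlib

open MeasureTheory Filter

namespace ZeroSpecAux

open Complex

noncomputable def fn (n : ℕ) (x : ℝ) : ℂ :=
  Complex.exp (Complex.I * n * x) * Complex.exp (-((x : ℂ) - n) ^ 2)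

noncomputable def un (n : ℕ) (x : ℝ) : ℂ :=
  ((Real.sqrt 2 : ℝ) : ℂ)⁻¹ *
    Complex.exp ((-(1/4) : ℂ) * x ^ 2 + (Complex.I * n - n / 2) * x +
      (Complex.I * n ^ 2 - n ^ 2 / 4))

lemma fn_eq (n : ℕ) (x : ℝ) :
    fn n x = Complex.exp ((-1 : ℂ) * x ^ 2 + (Complex.I * n + 2 * n) * x + (-(n ^ 2 : ℂ))) := by
  unfold fn; rw [← Complex.exp_add]; congr 1; ring

lemma cont_quad (b c d : ℂ) : Continuous fun x : ℝ => Complex.exp (b * x ^ 2 + c * x + d) :=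
  Complex.continuous_exp.comp <| ((continuous_const.mul ((Complex.continuous_ofReal).pow 2)).add
    (continuous_const.mul Complex.continuous_ofReal)).add continuous_const

lemma norm_cexp_quadratic (b c d : ℂ) (x : ℝ) :
    ‖Complex.exp (b * x ^ 2 + c * x + d)‖ = Real.exp (b.re * x ^ 2 + c.re * x + d.re) := by
  rw [Complex.norm_exp]
  congr 1
  simp [Complex.add_re, Complex.mul_re, ← Complex.ofReal_pow]

lemma norm_fn (n : ℕ) (x : ℝ) : ‖fn n x‖ = Real.exp (-(x - n) ^ 2) := by
  have h1 : ((n:ℂ)^2).re = (n:ℝ)^2 := by norm_cast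
  have h2 : ((n:ℂ)^2).im = 0 := by norm_cast
  rw [fn_eq, norm_cexp_quadratic]
  simp only [Complex.neg_re, Complex.one_re, Complex.add_re, Complex.mul_re, h1, h2]
  norm_num
  congr 1
  ring

lemma norm_un (n : ℕ) (x : ℝ) :
    ‖un n x‖ = (Real.sqrt 2)⁻¹ * Real.exp (-(x + n) ^ 2 / 4) := by
  have h1 : ((n:ℂ)^2).re = (n:ℝ)^2 := by norm_cast
  have h2 : ((n:ℂ)^2).im = 0 := by norm_cast
  unfold un
  rw [norm_mul, norm_cexp_quadratic]
  norm_num [h1, h2, _root_.abs_of_nonneg (Real.sqrt_nonneg 2)]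
  congr 1
  ring

lemma memℒp_two_quad {b : ℂ} (hb : b.re < 0) (c d : ℂ) :
    MemLp (fun x : ℝ => Complex.exp (b * x ^ 2 + c * x + d)) 2 volume := by
  rw [memLp_two_iff_integrable_sq_norm (cont_quad b c d).aestronglyMeasurable]
  have h2b : (2 * b).re < 0 := by
    simp only [Complex.mul_re, Complex.re_ofNat, Complex.im_ofNat]
    nlinarith
  refine (integrable_cexp_quadratic' h2b (2 * c) (2 * d)).norm.congr ?_
  filter_upwards with x
  rw [norm_cexp_quadratic, norm_cexp_quadratic, ← Real.exp_nat_mul]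
  congr 1
  simp only [Complex.mul_re, Complex.re_ofNat, Complex.im_ofNat]
  ring

lemma b4re : ((-(1/4) : ℂ)).re < 0 := by
  rw [show (-(1/4) : ℂ) = ((-(1/4) : ℝ) : ℂ) by norm_num, Complex.ofReal_re]
  norm_num

lemma memℒp_fn (n : ℕ) : MemLp (fn n) 2 volume := by
  have : fn n = fun x : ℝ =>
      Complex.exp ((-1 : ℂ) * x ^ 2 + (Complex.I * n + 2 * n) * x + (-(n ^ 2 : ℂ))) :=
    funext (fn_eq n)
  rw [this]
  exact memℒp_two_quad (by simp) _ _

lemma memℒp_un (n : ℕ) : MemLp (un n) 2 volume :=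
  (memℒp_two_quad b4re _ _).const_mul _

lemma integrable_un (n : ℕ) : Integrable (un n) volume :=
  (integrable_cexp_quadratic' b4re _ _).const_mul _

lemma key (n : ℕ) (ξ : ℝ) :
    (Real.sqrt (2 * Real.pi) : ℂ)⁻¹ * ∫ x : ℝ, Complex.exp (-(Complex.I * x * ξ)) * un n x
      = fn n ξ := by
  have hint : ∀ x : ℝ, Complex.exp (-(Complex.I * x * ξ)) * un n x
      = ((Real.sqrt 2 : ℝ) : ℂ)⁻¹ * Complex.exp ((-(1/4) : ℂ) * x ^ 2 +
          (Complex.I * n - n / 2 - Complex.I * ξ) * x + (Complex.I * n ^ 2 - n ^ 2 / 4)) := by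
    intro x
    unfold un
    rw [mul_left_comm, ← Complex.exp_add]
    congr 2
    ring
  simp_rw [hint]
  rw [integral_const_mul, integral_cexp_quadratic b4re]
  have hc : ((Real.pi : ℂ) / -(-(1/4))) = ((4 * Real.pi : ℝ) : ℂ) := by push_cast; ring
  have hpow : ((4 * Real.pi : ℝ) : ℂ) ^ (1/2 : ℂ) = ((Real.sqrt (4 * Real.pi) : ℝ) : ℂ) := by
    rw [show (1/2 : ℂ) = ((1/2 : ℝ) : ℂ) by norm_num,
      ← Complex.ofReal_cpow (by positivity) (1/2 : ℝ)]
    rw [Real.sqrt_eq_rpow]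
  rw [hc, hpow]
  have h1 : Real.sqrt (4 * Real.pi) = Real.sqrt 2 * Real.sqrt (2 * Real.pi) := by
    rw [← Real.sqrt_mul (by norm_num)]
    congr 1
    ring
  have hexp : Complex.exp ((Complex.I * n ^ 2 - n ^ 2 / 4) -
      (Complex.I * n - n / 2 - Complex.I * ξ) ^ 2 / (4 * (-(1/4)))) = fn n ξ := by
    unfold fn
    rw [← Complex.exp_add]
    congr 1
    linear_combination ((n : ℂ) - (ξ : ℂ)) ^ 2 * Complex.I_sq
  rw [hexp, h1]
  have h2 : ((Real.sqrt 2 : ℝ) : ℂ) ≠ 0 := by norm_cast; positivity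
  have h3 : ((Real.sqrt (2 * Real.pi) : ℝ) : ℂ) ≠ 0 := by norm_cast; positivity
  have h4 : ((Real.sqrt Real.pi : ℝ) : ℂ) ≠ 0 := by norm_cast; positivity
  push_cast
  field_simp

lemma eLpNorm_fn_shift (n : ℕ) : eLpNorm (fn n) 2 volume = eLpNorm (fn 0) 2 volume := by
  rw [eLpNorm_eq_lintegral_rpow_enorm_toReal two_ne_zero ENNReal.ofNat_ne_top,
      eLpNorm_eq_lintegral_rpow_enorm_toReal two_ne_zero ENNReal.ofNat_ne_top]
  congr 1
  rw [← lintegral_sub_right_eq_self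
    (fun x => ‖fn 0 x‖ₑ ^ (2 : ENNReal).toReal) (n : ℝ)]
  apply lintegral_congr
  intro x
  have hnn : ‖fn n x‖₊ = ‖fn 0 (x - n)‖₊ := by
    apply NNReal.coe_injective
    rw [coe_nnnorm, coe_nnnorm, norm_fn, norm_fn]
    push_cast
    ring_nf
  simp only [enorm_eq_nnnorm, hnn]

lemma eLpNorm_ind_le {a A : ℝ} (h : ℝ → ℂ) (hA : 0 ≤ A)
    (hbound : ∀ x ∈ Set.Ioo (-a) a, ‖h x‖ ≤ A) :
    (eLpNorm (fun x => (Set.Ioo (-a) a).indicator (fun _ => (1:ℂ)) x * h x) 2 volume).toReal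
      ≤ A * Real.sqrt (2 * a) := by
  have hmono : eLpNorm (fun x => (Set.Ioo (-a) a).indicator (fun _ => (1:ℂ)) x * h x) 2 volume
      ≤ eLpNorm ((Set.Ioo (-a) a).indicator (fun _ => (A : ℂ))) 2 volume := by
    apply eLpNorm_mono
    intro x
    by_cases hx : x ∈ Set.Ioo (-a) a
    · simp only [Set.indicator_of_mem hx, one_mul]
      calc ‖h x‖ ≤ A := hbound x hx
        _ ≤ ‖(A:ℂ)‖ := by rw [Complex.norm_real]; exact le_abs_self A
    · simp [Set.indicator_of_notMem hx]
  have heq : eLpNorm ((Set.Ioo (-a) a).indicator (fun _ => (A : ℂ))) 2 volume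
      = ‖(A:ℂ)‖₊ * (ENNReal.ofReal (2 * a)) ^ (1 / (2 : ENNReal).toReal) := by
    rw [eLpNorm_indicator_const measurableSet_Ioo two_ne_zero ENNReal.ofNat_ne_top]
    congr 1
    rw [Real.volume_Ioo]
    congr 1
    ring
  rcases le_or_gt a 0 with ha | ha
  · have : Real.sqrt (2 * a) = 0 := Real.sqrt_eq_zero_of_nonpos (by linarith)
    have h0 : Set.Ioo (-a) a = ∅ := Set.Ioo_eq_empty (by intro hlt; linarith)
    simp only [this, mul_zero]
    have : eLpNorm (fun x => (Set.Ioo (-a) a).indicator (fun _ => (1:ℂ)) x * h x) 2 volume = 0 := by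
      rw [h0]
      simp [eLpNorm_congr_ae (Filter.EventuallyEq.refl _ _)]
    rw [this]
    simp
  calc (eLpNorm (fun x => (Set.Ioo (-a) a).indicator (fun _ => (1:ℂ)) x * h x) 2 volume).toReal
      ≤ (eLpNorm ((Set.Ioo (-a) a).indicator (fun _ => (A : ℂ))) 2 volume).toReal := by
        apply ENNReal.toReal_mono _ hmono
        rw [heq]
        exact ENNReal.mul_ne_top ENNReal.coe_ne_top
          (ENNReal.rpow_ne_top_of_nonneg (by norm_num) ENNReal.ofReal_ne_top)
    _ = A * Real.sqrt (2 * a) := by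
        rw [heq, ENNReal.toReal_mul, ← ENNReal.toReal_rpow]
        congr 1
        · simp [Complex.norm_real, _root_.abs_of_nonneg hA]
        · rw [ENNReal.toReal_ofReal (by positivity)]
          rw [Real.sqrt_eq_rpow]
          norm_num

lemma tendsto_exp_sq (c : ℝ) :
    Tendsto (fun n : ℕ => Real.exp (-((n:ℝ) - c) ^ 2)) atTop (nhds 0) := by
  apply Real.tendsto_exp_atBot.comp
  apply (tendsto_neg_atTop_atBot).comp
  apply (tendsto_pow_atTop two_ne_zero).comp
  apply (tendsto_atTop_add_const_right _ (-c) tendsto_id).comp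
    tendsto_natCast_atTop_atTop

lemma tendsto_exp_sq4 (c : ℝ) :
    Tendsto (fun n : ℕ => Real.exp (-((n:ℝ) - c) ^ 2 / 4)) atTop (nhds 0) := by
  apply Real.tendsto_exp_atBot.comp
  have h1 : Tendsto (fun n : ℕ => -((n:ℝ) - c) ^ 2) atTop atBot := by
    apply (tendsto_neg_atTop_atBot).comp
    apply (tendsto_pow_atTop two_ne_zero).comp
    apply (tendsto_atTop_add_const_right _ (-c) tendsto_id).comp
      tendsto_natCast_atTop_atTop
  exact h1.atBot_div_const (by norm_num)

lemma fn_pos_norm : 0 < (eLpNorm (fn 0) 2 volume).toReal := by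
  have hmem := memℒp_fn 0
  rcases eq_or_lt_of_le (ENNReal.toReal_nonneg :
      (0:ℝ) ≤ (eLpNorm (fn 0) 2 volume).toReal) with h | h
  · exfalso
    have h0 : eLpNorm (fn 0) 2 volume = 0 := by
      have := hmem.2
      rcases (ENNReal.toReal_eq_zero_iff _).mp h.symm with h' | h'
      · exact h'
      · exact absurd h' this.ne
    have hae : fn 0 =ᵐ[volume] (0 : ℝ → ℂ) :=
      (eLpNorm_eq_zero_iff hmem.1 two_ne_zero).mp h0
    have hcont : Continuous (fn 0) := by
      have h : fn 0 = _ := funext (fn_eq 0)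
      rw [h]; exact cont_quad _ _ _
    have heq : fn 0 = 0 := hcont.ae_eq_iff_eq volume continuous_const |>.mp hae
    have : fn 0 0 = 0 := by rw [heq]; rfl
    unfold fn at this
    simp at this
  · exact h

end ZeroSpecAux

open ZeroSpecAux

theorem zero_mem_spectrum_time_plus_band (τ ω : ℝ) (hτ : 0 < τ) (hω : 0 < ω)
    (F : Lp ℂ 2 (volume : Measure ℝ) ≃ₗᵢ[ℂ] Lp ℂ 2 (volume : Measure ℝ))
    (hF : ∀ f : Lp ℂ 2 (volume : Measure ℝ), Integrable (f : ℝ → ℂ) volume →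
      (F f : ℝ → ℂ) =ᵐ[volume] fun ξ : ℝ =>
        (Real.sqrt (2 * Real.pi) : ℂ)⁻¹ * ∫ x : ℝ, Complex.exp (-(Complex.I * x * ξ)) * f x)
    (Pτ Pω : Lp ℂ 2 (volume : Measure ℝ) →L[ℂ] Lp ℂ 2 (volume : Measure ℝ))
    (hPτ : ∀ f : Lp ℂ 2 (volume : Measure ℝ),
      (Pτ f : ℝ → ℂ) =ᵐ[volume] fun x => (Set.Ioo (-τ) τ).indicator (fun _ => (1 : ℂ)) x * f x)
    (hPω : ∀ f : Lp ℂ 2 (volume : Measure ℝ),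
      (Pω f : ℝ → ℂ) =ᵐ[volume] fun x => (Set.Ioo (-ω) ω).indicator (fun _ => (1 : ℂ)) x * f x) :
    (0 : ℂ) ∈ spectrum ℂ
      (Pτ + (F.toContinuousLinearEquiv : Lp ℂ 2 (volume : Measure ℝ) →L[ℂ] Lp ℂ 2 (volume : Measure ℝ))
            ∘L Pω ∘L (F.symm.toContinuousLinearEquiv :
              Lp ℂ 2 (volume : Measure ℝ) →L[ℂ] Lp ℂ 2 (volume : Measure ℝ))) ∧
    ∀ g : ℕ → Lp ℂ 2 (volume : Measure ℝ),
      (∀ n : ℕ, (g n : ℝ → ℂ) =ᵐ[volume] fun x : ℝ =>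
        Complex.exp (Complex.I * n * x) * Complex.exp (-((x : ℂ) - n) ^ 2)) →
      (∀ n : ℕ, ‖g n‖ = ‖g 0‖) ∧ 0 < ‖g 0‖ ∧
      Tendsto (fun n : ℕ => ‖(Pτ + (F.toContinuousLinearEquiv :
          Lp ℂ 2 (volume : Measure ℝ) →L[ℂ] Lp ℂ 2 (volume : Measure ℝ))
            ∘L Pω ∘L (F.symm.toContinuousLinearEquiv :
              Lp ℂ 2 (volume : Measure ℝ) →L[ℂ] Lp ℂ 2 (volume : Measure ℝ))) (g n)‖)
        atTop (nhds 0) := by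
  set H := Lp ℂ 2 (volume : Measure ℝ)
  set T : H →L[ℂ] H := Pτ + (F.toContinuousLinearEquiv : H →L[ℂ] H)
      ∘L Pω ∘L (F.symm.toContinuousLinearEquiv : H →L[ℂ] H) with hT
  have hTapp : ∀ f : H, T f = Pτ f + F (Pω (F.symm f)) := by
    intro f
    simp [hT, ContinuousLinearMap.add_apply, ContinuousLinearMap.comp_apply]
  -- main part
  have main : ∀ g : ℕ → H,
      (∀ n : ℕ, (g n : ℝ → ℂ) =ᵐ[volume] fun x : ℝ =>
        Complex.exp (Complex.I * n * x) * Complex.exp (-((x : ℂ) - n) ^ 2)) →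
      (∀ n : ℕ, ‖g n‖ = ‖g 0‖) ∧ 0 < ‖g 0‖ ∧
      Tendsto (fun n : ℕ => ‖T (g n)‖) atTop (nhds 0) := by
    intro g hg
    have hgfn : ∀ n, (g n : ℝ → ℂ) =ᵐ[volume] fn n := hg
    have hnorm : ∀ n, ‖g n‖ = (eLpNorm (fn n) 2 volume).toReal := by
      intro n
      rw [Lp.norm_def, eLpNorm_congr_ae (hgfn n)]
    refine ⟨fun n => by rw [hnorm n, hnorm 0, eLpNorm_fn_shift n], ?_, ?_⟩
    · rw [hnorm 0]; exact fn_pos_norm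
    -- the tendsto part
    · -- Un : the inverse Fourier picture
      have hUn : ∀ n : ℕ, F.symm (g n) = (memℒp_un n).toLp (un n) := by
        intro n
        set Un : H := (memℒp_un n).toLp (un n) with hUdef
        have hcoe : (Un : ℝ → ℂ) =ᵐ[volume] un n := MemLp.coeFn_toLp _
        have hint : Integrable (Un : ℝ → ℂ) volume := (integrable_un n).congr hcoe.symm
        have hFU : (F Un : ℝ → ℂ) =ᵐ[volume] fn n := by
          refine (hF Un hint).trans ?_
          have hval : ∀ ξ : ℝ,
              (Real.sqrt (2 * Real.pi) : ℂ)⁻¹ *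
                ∫ x : ℝ, Complex.exp (-(Complex.I * x * ξ)) * (Un : ℝ → ℂ) x = fn n ξ := by
            intro ξ
            rw [← key n ξ]
            congr 1
            apply integral_congr_ae
            filter_upwards [hcoe] with x hx
            rw [hx]
          filter_upwards with ξ
          exact hval ξ
        have : F Un = g n := Lp.ext (hFU.trans (hgfn n).symm)
        rw [← this, LinearIsometryEquiv.symm_apply_apply]
      -- bounds
      have hPτbound : ∀ n : ℕ, τ ≤ (n : ℝ) →
          ‖Pτ (g n)‖ ≤ Real.exp (-((n:ℝ) - τ) ^ 2) * Real.sqrt (2 * τ) := by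
        intro n hn
        have h1 : (Pτ (g n) : ℝ → ℂ) =ᵐ[volume]
            fun x => (Set.Ioo (-τ) τ).indicator (fun _ => (1 : ℂ)) x * fn n x := by
          refine (hPτ (g n)).trans ?_
          filter_upwards [hgfn n] with x hx
          rw [hx]
        rw [Lp.norm_def, eLpNorm_congr_ae h1]
        apply eLpNorm_ind_le _ (Real.exp_pos _).le
        intro x hx
        rw [norm_fn]
        apply Real.exp_le_exp.mpr
        have hx2 := hx.2
        nlinarith [hx.2]
      have hPωbound : ∀ n : ℕ, ω ≤ (n : ℝ) →
          ‖Pω (F.symm (g n))‖ ≤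
            (Real.sqrt 2)⁻¹ * Real.exp (-((n:ℝ) - ω) ^ 2 / 4) * Real.sqrt (2 * ω) := by
        intro n hn
        rw [hUn n]
        have h1 : (Pω ((memℒp_un n).toLp (un n)) : ℝ → ℂ) =ᵐ[volume]
            fun x => (Set.Ioo (-ω) ω).indicator (fun _ => (1 : ℂ)) x * un n x := by
          refine (hPω _).trans ?_
          filter_upwards [MemLp.coeFn_toLp (memℒp_un n)] with x hx
          rw [hx]
        rw [Lp.norm_def, eLpNorm_congr_ae h1]
        apply eLpNorm_ind_le _ (by positivity)
        intro x hx
        rw [norm_un]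
        apply mul_le_mul_of_nonneg_left _ (by positivity)
        apply Real.exp_le_exp.mpr
        have hx1 := hx.1
        nlinarith [hx.1]
      -- squeeze
      have hb : Tendsto (fun n : ℕ => Real.exp (-((n:ℝ) - τ) ^ 2) * Real.sqrt (2 * τ) +
          (Real.sqrt 2)⁻¹ * Real.exp (-((n:ℝ) - ω) ^ 2 / 4) * Real.sqrt (2 * ω))
          atTop (nhds 0) := by
        have h1 := (tendsto_exp_sq τ).mul_const (Real.sqrt (2 * τ))
        have h2 := ((tendsto_exp_sq4 ω).const_mul (Real.sqrt 2)⁻¹).mul_const (Real.sqrt (2 * ω))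
        simpa using h1.add h2
      apply squeeze_zero' (Filter.Eventually.of_forall fun n => norm_nonneg _) _ hb
      have hev : ∀ᶠ n : ℕ in atTop, τ ≤ (n : ℝ) ∧ ω ≤ (n : ℝ) :=
        (tendsto_natCast_atTop_atTop.eventually_ge_atTop τ).and
          (tendsto_natCast_atTop_atTop.eventually_ge_atTop ω)
      filter_upwards [hev] with n hn
      calc ‖T (g n)‖ = ‖Pτ (g n) + F (Pω (F.symm (g n)))‖ := by rw [hTapp]
        _ ≤ ‖Pτ (g n)‖ + ‖F (Pω (F.symm (g n)))‖ := norm_add_le _ _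
        _ = ‖Pτ (g n)‖ + ‖Pω (F.symm (g n))‖ := by rw [LinearIsometryEquiv.norm_map]
        _ ≤ _ := add_le_add (hPτbound n hn.1) (hPωbound n hn.2)
  -- spectrum part
  constructor
  · set gc : ℕ → H := fun n => (memℒp_fn n).toLp (fn n) with hgc
    have hgcae : ∀ n : ℕ, (gc n : ℝ → ℂ) =ᵐ[volume] fun x : ℝ =>
        Complex.exp (Complex.I * n * x) * Complex.exp (-((x : ℂ) - n) ^ 2) :=
      fun n => MemLp.coeFn_toLp _
    obtain ⟨hne, hpos, htend⟩ := main gc hgcae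
    rw [spectrum.zero_mem_iff]
    intro hu
    obtain ⟨u, hu⟩ := hu
    have hinv : ∀ f : H, (↑u⁻¹ : H →L[ℂ] H) (T f) = f := by
      intro f
      rw [← hu, ← ContinuousLinearMap.mul_apply, ← Units.val_mul, inv_mul_cancel]
      simp
    have hle : ∀ n : ℕ, ‖gc 0‖ ≤ ‖(↑u⁻¹ : H →L[ℂ] H)‖ * ‖T (gc n)‖ := by
      intro n
      rw [← hne n]
      conv_lhs => rw [← hinv (gc n)]
      exact (↑u⁻¹ : H →L[ℂ] H).le_opNorm _
    have : Tendsto (fun n : ℕ => ‖(↑u⁻¹ : H →L[ℂ] H)‖ * ‖T (gc n)‖) atTop (nhds 0) := by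
      have h := htend.const_mul ‖(↑u⁻¹ : H →L[ℂ] H)‖
      rw [mul_zero] at h
      exact h
    have h0 : ‖gc 0‖ ≤ 0 := ge_of_tendsto' this hle
    linarith
  · exact main
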